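/- With *g_{ij} as in the h-exponential change and N^j the unit normal of F^{n−1} (satisfying l_i N^i = 0, g_{ij} B^i_α N^j = 0), one has *g_{ij} B^i_α N^j = (b_j N^j) e^{2τ} { (1−2τ) l_i B^i_α + 2 b_i B^i_α }. Consequently, N^j is normal to the hypersurface with respect to *g if and only if b_j N^j = 0, since e^{2τ}{(1−2τ) l_i B^i_α + 2 b_i B^i_α} cannot vanish identically (its transvection by v^α would force L = 0). -/
import Mathlib


/-- With `*g_{ij}` of the h-exponential change and `N^j` the unit normal of
`F^{n−1}` in `F^n` (`l_iN^i = 0`, `g_{ij}B^i_αN^j = 0`), one has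
`*g_{ij}B^i_αN^j = (b_jN^j) e^{2τ} {(1−2τ) l_iB^i_α + 2 b_iB^i_α}`; consequently `N^j`
is normal to the hypersurface with respect to `*g` iff `b_jN^j = 0` (using
`l_iB^i_α v^α = L ≠ 0`, `b_iB^i_α v^α = β`, `τ = β/L`). -/
theorem stmt_10 {n p : ℕ} (g sg : Fin n → Fin n → ℝ)
    (l b N : Fin n → ℝ) (B : Fin n → Fin p → ℝ) (v : Fin p → ℝ)
    (L βv τ ρ ν : ℝ) (hL0 : L ≠ 0) (hτ : τ = βv / L) (hν : ν = 1 + ρ - τ)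
    (hsg : ∀ i j, sg i j = ν * Real.exp (2*τ) * g i j
        + Real.exp (2*τ) * (2*τ^2 - τ - ρ) * l i * l j
        + Real.exp (2*τ) * (1 - 2*τ) * (b i * l j + b j * l i)
        + 2 * Real.exp (2*τ) * b i * b j)
    (hlN : ∑ i, l i * N i = 0)
    (hgBN : ∀ α, ∑ i, ∑ j, g i j * B i α * N j = 0)
    (hNN : ∑ i, ∑ j, g i j * N i * N j = 1)
    (hlBv : ∑ α, (∑ i, l i * B i α) * v α = L)
    (hbBv : ∑ α, (∑ i, b i * B i α) * v α = βv) :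
    (∀ α, ∑ i, ∑ j, sg i j * B i α * N j
        = (∑ j, b j * N j) * Real.exp (2*τ)
          * ((1 - 2*τ) * (∑ i, l i * B i α) + 2 * (∑ i, b i * B i α)))
    ∧ ((∀ α, ∑ i, ∑ j, sg i j * B i α * N j = 0) ↔ (∑ j, b j * N j) = 0) := by
  set e := Real.exp (2*τ) with he
  have hE : e ≠ 0 := Real.exp_ne_zero _
  have hβ : βv = τ * L := by
    field_simp at hτ; linarith [hτ]
  have hsplit : ∀ (c : ℝ) (f h : Fin n → ℝ),
      (∑ i, ∑ j, c * (f i * h j)) = c * ((∑ i, f i) * (∑ j, h j)) := by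
    intro c f h
    rw [Finset.sum_mul_sum, Finset.mul_sum]
    exact Finset.sum_congr rfl fun i _ => by rw [Finset.mul_sum]
  have part1 : ∀ α, ∑ i, ∑ j, sg i j * B i α * N j
      = (∑ j, b j * N j) * e
        * ((1 - 2*τ) * (∑ i, l i * B i α) + 2 * (∑ i, b i * B i α)) := by
    intro α
    have step1 : ∑ i, ∑ j, sg i j * B i α * N j
        = ∑ i, ∑ j, ((ν * e) * (g i j * B i α * N j)
            + (e * (2*τ^2 - τ - ρ)) * ((l i * B i α) * (l j * N j))
            + ((e * (1 - 2*τ)) * ((b i * B i α) * (l j * N j))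
              + (e * (1 - 2*τ)) * ((l i * B i α) * (b j * N j)))
            + (2 * e) * ((b i * B i α) * (b j * N j))) := by
      refine Finset.sum_congr rfl fun i _ => Finset.sum_congr rfl fun j _ => ?_
      rw [hsg]; ring
    rw [step1]
    simp only [Finset.sum_add_distrib]
    have h1 : ∑ i, ∑ j, (ν * e) * (g i j * B i α * N j) = 0 := by
      have : ∑ i, ∑ j, (ν * e) * (g i j * B i α * N j)
          = (ν * e) * ∑ i, ∑ j, g i j * B i α * N j := by
        rw [Finset.mul_sum]
        exact Finset.sum_congr rfl fun i _ => by rw [Finset.mul_sum]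
      rw [this, hgBN α, mul_zero]
    rw [h1, hsplit, hsplit, hsplit, hsplit, hlN]
    ring
  refine ⟨part1, ?_, fun h0 α => by rw [part1 α, h0]; ring⟩
  intro h
  have hsum : ∑ α, (∑ i, ∑ j, sg i j * B i α * N j) * v α = 0 := by
    simp [h]
  simp only [part1] at hsum
  have hcalc : ∑ α, ((∑ j, b j * N j) * e
        * ((1 - 2*τ) * (∑ i, l i * B i α) + 2 * (∑ i, b i * B i α))) * v α
      = (∑ j, b j * N j) * e * ((1 - 2*τ) * L + 2 * βv) := by
    calc ∑ α, ((∑ j, b j * N j) * e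
          * ((1 - 2*τ) * (∑ i, l i * B i α) + 2 * (∑ i, b i * B i α))) * v α
        = ∑ α, ((∑ j, b j * N j) * e)
            * ((1 - 2*τ) * ((∑ i, l i * B i α) * v α)
              + 2 * ((∑ i, b i * B i α) * v α)) :=
          Finset.sum_congr rfl fun α _ => by ring
      _ = ((∑ j, b j * N j) * e)
            * ∑ α, ((1 - 2*τ) * ((∑ i, l i * B i α) * v α)
              + 2 * ((∑ i, b i * B i α) * v α)) := (Finset.mul_sum _ _ _).symm
      _ = ((∑ j, b j * N j) * e)
            * ((1 - 2*τ) * (∑ α, (∑ i, l i * B i α) * v α)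
              + 2 * (∑ α, (∑ i, b i * B i α) * v α)) := by
          rw [Finset.sum_add_distrib, ← Finset.mul_sum, ← Finset.mul_sum]
      _ = (∑ j, b j * N j) * e * ((1 - 2*τ) * L + 2 * βv) := by rw [hlBv, hbBv]
  rw [hcalc] at hsum
  have hLeq : (1 - 2*τ) * L + 2 * βv = L := by rw [hβ]; ring
  rw [hLeq] at hsum
  have : (∑ j, b j * N j) * (e * L) = 0 := by linarith [hsum]
  exact (mul_eq_zero.mp this).resolve_right (mul_ne_zero hE hL0)
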